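/- arXiv:2412.12950 — 3 statements merged into one kernel-verified Lean document; each statement's English description precedes it below -/
import Mathlib

section
/- Let n ≥ 3 and μ ∈ (0, n). There exists a constant c_{n,μ} > 0, depending only on n and μ, such that for all a ∈ ℝⁿ, λ > 0, and x ∈ ℝⁿ: ∫_{ℝⁿ} δ_{(a,λ)}(y)^{2*_μ} |x−y|^{−μ} dy = c_{n,μ} · δ_{(a,λ)}(x)^{μ/(n−2)}. -/
open MeasureTheory Set Real
open scoped ENNReal

noncomputable section

/-- Scaling change of variables for lintegrals on `Ioi 0`. -/
lemma lint_scale {b : ℝ} (hb : 0 < b) (f : ℝ → ℝ≥0∞) (hf : Measurable f) :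
    ∫⁻ x in Ioi (0:ℝ), f (b * x) = ENNReal.ofReal b⁻¹ * ∫⁻ x in Ioi (0:ℝ), f x := by
  have hpre : (fun x : ℝ => b * x) ⁻¹' Ioi 0 = Ioi 0 := by
    ext x; simp [mul_pos_iff_of_pos_left, hb]
  have hmap : Measure.map (fun x : ℝ => b * x) (volume.restrict (Ioi (0:ℝ)))
      = (ENNReal.ofReal b⁻¹) • volume.restrict (Ioi (0:ℝ)) := by
    rw [← hpre, ← Measure.restrict_map (measurable_const_mul b) measurableSet_Ioi,
      Real.map_volume_mul_left hb.ne', hpre, Measure.restrict_smul,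
      abs_of_pos (inv_pos.mpr hb)]
  calc ∫⁻ x in Ioi (0:ℝ), f (b * x)
      = ∫⁻ y, f y ∂(Measure.map (fun x : ℝ => b * x) (volume.restrict (Ioi (0:ℝ)))) := by
        rw [lintegral_map hf (measurable_const_mul b)]
    _ = ENNReal.ofReal b⁻¹ * ∫⁻ x in Ioi (0:ℝ), f x := by
        rw [hmap, lintegral_smul_measure, smul_eq_mul]

/-- The Gamma-integral representation as an lintegral. -/
lemma lint_gamma {p A : ℝ} (hp : 0 < p) (hA : 0 < A) :
    ∫⁻ t in Ioi (0:ℝ), ENNReal.ofReal (t ^ (p - 1) * Real.exp (-(A * t)))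
      = ENNReal.ofReal (Real.Gamma p * A ^ (-p)) := by
  have meas : Measurable fun u : ℝ => ENNReal.ofReal ((A⁻¹ * u) ^ (p - 1) * Real.exp (-u)) := by
    fun_prop
  have base : ∫⁻ u in Ioi (0:ℝ), ENNReal.ofReal (u ^ (p - 1) * Real.exp (-u))
      = ENNReal.ofReal (Real.Gamma p) := by
    rw [Real.Gamma_eq_integral hp,
      ← ofReal_integral_eq_lintegral_ofReal ((Real.GammaIntegral_convergent hp).congr_fun
        (fun x _ => by ring) measurableSet_Ioi) ?_]
    · congr 1
      exact setIntegral_congr_fun measurableSet_Ioi fun x _ => by ring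
    · filter_upwards [ae_restrict_mem measurableSet_Ioi] with x hx
      have : (0:ℝ) < x := hx
      positivity
  have step1 : ∫⁻ t in Ioi (0:ℝ), ENNReal.ofReal (t ^ (p - 1) * Real.exp (-(A * t)))
      = ∫⁻ t in Ioi (0:ℝ),
          (fun u => ENNReal.ofReal ((A⁻¹ * u) ^ (p - 1) * Real.exp (-u))) (A * t) := by
    refine lintegral_congr fun t => ?_
    simp only [inv_mul_cancel_left₀ hA.ne']
  rw [step1, lint_scale hA _ meas]
  have step2 : ∫⁻ u in Ioi (0:ℝ), ENNReal.ofReal ((A⁻¹ * u) ^ (p - 1) * Real.exp (-u))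
      = ENNReal.ofReal (A⁻¹ ^ (p-1)) * ENNReal.ofReal (Real.Gamma p) := by
    rw [← base, ← lintegral_const_mul' _ _ ENNReal.ofReal_ne_top]
    refine setLIntegral_congr_fun measurableSet_Ioi (fun u hu => ?_)
    rw [Real.mul_rpow (by positivity) hu.le, ← ENNReal.ofReal_mul (by positivity), mul_assoc]
  rw [step2, ← mul_assoc, ← ENNReal.ofReal_mul (by positivity),
    ← ENNReal.ofReal_mul (by positivity)]
  congr 1
  rw [← Real.rpow_neg_one A, ← Real.rpow_mul hA.le, ← Real.rpow_add hA,
    show (-1:ℝ) + -1*(p-1) = -p by ring]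
  ring

variable {n : ℕ}

local notation "E" n => EuclideanSpace ℝ (Fin n)

lemma integrable_gauss {b : ℝ} (hb : 0 < b) :
    Integrable (fun z : EuclideanSpace ℝ (Fin n) => Real.exp (-(b * ‖z‖^2))) := by
  have h := GaussianFourier.integrable_cexp_neg_mul_sq_norm_add
    (V := EuclideanSpace ℝ (Fin n)) (b := (b:ℂ)) (by simpa using hb) 0 0
  have := h.norm
  refine this.congr (Filter.Eventually.of_forall fun z => ?_)
  simp [Complex.norm_exp, neg_mul, ← Complex.ofReal_pow]

lemma integral_gauss {b : ℝ} (hb : 0 < b) :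
    ∫ z : EuclideanSpace ℝ (Fin n), Real.exp (-(b * ‖z‖^2)) = (π / b) ^ ((n:ℝ)/2) := by
  have h := GaussianFourier.integral_rexp_neg_mul_sq_norm (V := EuclideanSpace ℝ (Fin n)) hb
  simp only [neg_mul] at h ⊢
  rw [h, finrank_euclideanSpace_fin]

lemma lint_gauss_conv {t u : ℝ} (ht : 0 < t) (hu : 0 < u) (X : EuclideanSpace ℝ (Fin n)) :
    ∫⁻ z : EuclideanSpace ℝ (Fin n),
        ENNReal.ofReal (Real.exp (-(t * ‖z‖^2) - u * ‖X - z‖^2))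
      = ENNReal.ofReal ((π / (t+u)) ^ ((n:ℝ)/2) * Real.exp (-(t*u/(t+u) * ‖X‖^2))) := by
  have htu : (0:ℝ) < t + u := by linarith
  set c : EuclideanSpace ℝ (Fin n) := (u/(t+u)) • X with hc
  have key : ∀ z : EuclideanSpace ℝ (Fin n),
      -(t * ‖z‖^2) - u * ‖X - z‖^2 = -((t+u) * ‖z - c‖^2) + -(t*u/(t+u) * ‖X‖^2) := by
    intro z
    have h1 : ‖X - z‖^2 = ‖X‖^2 - 2 * inner ℝ X z + ‖z‖^2 := by
      rw [norm_sub_sq_real]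
    have h2 : ‖z - c‖^2 = ‖z‖^2 - 2 * ((u/(t+u)) * inner ℝ X z) + (u/(t+u))^2 * ‖X‖^2 := by
      rw [norm_sub_sq_real, hc, real_inner_smul_right, norm_smul, real_inner_comm]
      rw [mul_pow, Real.norm_eq_abs, sq_abs]
    rw [h1, h2]
    field_simp
    ring
  simp_rw [key, Real.exp_add, ENNReal.ofReal_mul (Real.exp_pos _).le]
  rw [lintegral_mul_const' _ _ ENNReal.ofReal_ne_top,
    ENNReal.ofReal_mul (by positivity : (0:ℝ) ≤ (π / (t+u)) ^ ((n:ℝ)/2))]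
  congr 1
  have hint : Integrable (fun z : EuclideanSpace ℝ (Fin n) => Real.exp (-((t+u) * ‖z - c‖^2))) :=
    (integrable_gauss htu).comp_sub_right c
  rw [← ofReal_integral_eq_lintegral_ofReal hint
    (Filter.Eventually.of_forall fun z => (Real.exp_pos _).le)]
  congr 1
  rw [integral_sub_right_eq_self (fun z : EuclideanSpace ℝ (Fin n) =>
    Real.exp (-((t+u) * ‖z‖^2))) c]
  exact integral_gauss htu

lemma beta_integrable {p q : ℝ} (hp : 0 < p) (hpq : p < q) :
    IntegrableOn (fun w : ℝ => w ^ (p - 1) * (1 + w) ^ (-q)) (Ioi (0:ℝ)) := by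
  have hmeas : AEStronglyMeasurable (fun w : ℝ => w ^ (p - 1) * (1 + w) ^ (-q))
      (volume.restrict (Ioi (0:ℝ))) := by
    apply Measurable.aestronglyMeasurable; fun_prop
  rw [← Ioc_union_Ioi_eq_Ioi (zero_le_one (α := ℝ)), integrableOn_union]
  constructor
  · have hbase : IntegrableOn (fun w : ℝ => w ^ (p - 1)) (Ioc (0:ℝ) 1) := by
      rw [← intervalIntegrable_iff_integrableOn_Ioc_of_le zero_le_one]
      exact intervalIntegral.intervalIntegrable_rpow' (by linarith)
    refine Integrable.mono' hbase (hmeas.mono_set Ioc_subset_Ioi_self) ?_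
    filter_upwards [ae_restrict_mem measurableSet_Ioc] with w hw
    have hw0 : (0:ℝ) < w := hw.1
    rw [Real.norm_eq_abs, abs_of_nonneg (by positivity)]
    have h1 : (1 + w) ^ (-q) ≤ 1 := by
      apply Real.rpow_le_one_of_one_le_of_nonpos (by linarith) (by linarith)
    nlinarith [Real.rpow_nonneg hw0.le (p-1), Real.rpow_nonneg (by linarith : (0:ℝ) ≤ 1+w) (-q)]
  · have hbase : IntegrableOn (fun w : ℝ => w ^ (p - 1 - q)) (Ioi (1:ℝ)) :=
      integrableOn_Ioi_rpow_of_lt (by linarith) one_pos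
    refine Integrable.mono' hbase (hmeas.mono_set (Ioi_subset_Ioi zero_le_one)) ?_
    filter_upwards [ae_restrict_mem measurableSet_Ioi] with w hw
    have hw1 : (1:ℝ) < w := hw
    have hw0 : (0:ℝ) < w := by linarith
    rw [Real.norm_eq_abs, abs_of_nonneg (by positivity)]
    have h1 : (1 + w) ^ (-q) ≤ w ^ (-q) := by
      apply Real.rpow_le_rpow_of_nonpos hw0 (by linarith) (by linarith)
    calc w ^ (p-1) * (1+w) ^ (-q) ≤ w ^ (p-1) * w ^ (-q) := by
          exact mul_le_mul_of_nonneg_left h1 (Real.rpow_nonneg hw0.le _)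
      _ = w ^ (p - 1 - q) := by rw [← Real.rpow_add hw0]; ring_nf

lemma beta_pos {p q : ℝ} (hp : 0 < p) (hpq : p < q) :
    0 < ∫ w in Ioi (0:ℝ), w ^ (p - 1) * (1 + w) ^ (-q) := by
  rw [setIntegral_pos_iff_support_of_nonneg_ae ?_ (beta_integrable hp hpq)]
  · have hsub : Ioi (0:ℝ) ⊆ (Function.support fun w : ℝ => w ^ (p-1) * (1+w) ^ (-q)) ∩ Ioi 0 := by
      intro w hw
      have hw0 : (0:ℝ) < w := hw
      refine ⟨?_, hw⟩
      simp only [Function.mem_support]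
      positivity
    calc (0:ℝ≥0∞) < volume (Ioi (0:ℝ)) := by simp [Real.volume_Ioi]
      _ ≤ _ := measure_mono hsub
  · filter_upwards [ae_restrict_mem measurableSet_Ioi] with w hw
    have hw0 : (0:ℝ) < w := hw
    positivity

lemma beta_lint {p q : ℝ} (hp : 0 < p) (hpq : p < q) :
    ∫⁻ w in Ioi (0:ℝ), ENNReal.ofReal (w ^ (p - 1) * (1 + w) ^ (-q))
      = ENNReal.ofReal (∫ w in Ioi (0:ℝ), w ^ (p - 1) * (1 + w) ^ (-q)) := by
  rw [← ofReal_integral_eq_lintegral_ofReal (beta_integrable hp hpq) ?_]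
  filter_upwards [ae_restrict_mem measurableSet_Ioi] with w hw
  have hw0 : (0:ℝ) < w := hw
  positivity

lemma lint_scale' {b : ℝ} (hb : 0 < b) (f : ℝ → ℝ≥0∞) (hf : Measurable f) :
    ∫⁻ x in Ioi (0:ℝ), f x = ENNReal.ofReal b * ∫⁻ x in Ioi (0:ℝ), f (b * x) := by
  rw [lint_scale hb f hf, ← mul_assoc, ← ENNReal.ofReal_mul hb.le, mul_inv_cancel₀ hb.ne',
    ENNReal.ofReal_one, one_mul]

set_option maxHeartbeats 2000000 in
lemma core_one (n : ℕ) (hn : 3 ≤ n) {μ : ℝ} (hμ0 : 0 < μ) (hμn : μ < n)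
    (X : EuclideanSpace ℝ (Fin n)) :
    ∫⁻ z : EuclideanSpace ℝ (Fin n),
        ENNReal.ofReal ((1 + ‖z‖^2) ^ (-((n:ℝ) - μ/2)) * ‖X - z‖ ^ (-μ))
      = ENNReal.ofReal
          ((π ^ ((n:ℝ)/2) * Real.Gamma ((n:ℝ)/2)
              * (∫ w in Ioi (0:ℝ), w ^ (μ/2 - 1) * (1 + w) ^ (-((n:ℝ)/2)))
              / (Real.Gamma ((n:ℝ) - μ/2) * Real.Gamma (μ/2)))
            * (1 + ‖X‖^2) ^ (-(μ/2))) := by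
  have hn3 : (3:ℝ) ≤ (n:ℝ) := by exact_mod_cast hn
  set s : ℝ := (n:ℝ) - μ/2 with hs_def
  set p : ℝ := μ/2 with hp_def
  have hs : 0 < s := by simp only [hs_def]; linarith
  have hp : 0 < p := by simp only [hp_def]; linarith
  have hpn : p < (n:ℝ)/2 := by simp only [hp_def]; linarith
  have hsp : s + p = (n:ℝ) := by simp only [hs_def, hp_def]; ring
  set K : ℝ := ‖X‖^2 with hK_def
  have hK : 0 ≤ K := by positivity
  have hΓs := Real.Gamma_pos_of_pos hs
  have hΓp := Real.Gamma_pos_of_pos hp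
  set Breal : ℝ := ∫ w in Ioi (0:ℝ), w ^ (p - 1) * (1 + w) ^ (-((n:ℝ)/2)) with hB_def
  -- the measure ν on (0,∞)
  set ν : Measure ℝ := volume.restrict (Ioi (0:ℝ)) with hν_def
  -- main two-variable integrand after the Gaussian step
  set φ : ℝ → ℝ → ℝ := fun t u =>
    (t ^ (s-1) * u ^ (p-1) * Real.exp (-t))
      * ((π / (t+u)) ^ ((n:ℝ)/2) * Real.exp (-(t*u/(t+u) * K))) with hφ_def
  set ψ : ℝ → ℝ → ℝ := fun t v =>
    (t ^ ((n:ℝ)/2 - 1) * Real.exp (-((1 + v*K/(1+v)) * t)))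
      * (v ^ (p-1) * (1+v) ^ (-((n:ℝ)/2))) with hψ_def
  -- Step 0: multiply by Γ s * Γ p
  rw [← ENNReal.mul_right_inj
    (a := ENNReal.ofReal (Real.Gamma s * Real.Gamma p))
    (by positivity) ENNReal.ofReal_ne_top]
  calc ENNReal.ofReal (Real.Gamma s * Real.Gamma p)
        * ∫⁻ z : EuclideanSpace ℝ (Fin n),
            ENNReal.ofReal ((1 + ‖z‖^2) ^ (-s) * ‖X - z‖ ^ (-μ))
      = ∫⁻ z : EuclideanSpace ℝ (Fin n), ∫⁻ q,
          ENNReal.ofReal ((q.1 ^ (s-1) * q.2 ^ (p-1) * Real.exp (-q.1))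
            * Real.exp (-(q.1 * ‖z‖^2) - q.2 * ‖X - z‖^2)) ∂(ν.prod ν) := by
        haveI : Nonempty (Fin n) := ⟨⟨0, by omega⟩⟩
        have hprod_ae : ∀ᵐ q : ℝ × ℝ ∂(ν.prod ν), q ∈ Ioi (0:ℝ) ×ˢ Ioi (0:ℝ) := by
          rw [hν_def, Measure.prod_restrict]
          exact ae_restrict_mem (measurableSet_Ioi.prod measurableSet_Ioi)
        have hae : ∀ᵐ z : EuclideanSpace ℝ (Fin n), z ≠ X := by
          rw [ae_iff]
          convert measure_singleton (μ := (volume : Measure (EuclideanSpace ℝ (Fin n)))) X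
            using 2
          ext z; simp
        rw [← lintegral_const_mul' _ _ ENNReal.ofReal_ne_top]
        refine lintegral_congr_ae (hae.mono fun z hz => ?_)
        have hxz : (0:ℝ) < ‖X - z‖ := by
          rw [norm_pos_iff, sub_ne_zero]; exact fun h => hz h.symm
        have hA2 : (‖X - z‖^2) ^ (-p) = ‖X - z‖ ^ (-μ) := by
          rw [← Real.rpow_natCast ‖X - z‖ 2, ← Real.rpow_mul (norm_nonneg _)]
          congr 1
          rw [hp_def]; push_cast; ring
        have h1z : (0:ℝ) < 1 + ‖z‖^2 := by positivity
        calc ENNReal.ofReal (Real.Gamma s * Real.Gamma p)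
              * ENNReal.ofReal ((1 + ‖z‖^2) ^ (-s) * ‖X - z‖ ^ (-μ))
            = ENNReal.ofReal (Real.Gamma s * (1 + ‖z‖^2) ^ (-s))
                * ENNReal.ofReal (Real.Gamma p * (‖X - z‖^2) ^ (-p)) := by
              rw [← ENNReal.ofReal_mul (by positivity), ← ENNReal.ofReal_mul (by positivity),
                hA2]
              congr 1; ring
          _ = (∫⁻ t, ENNReal.ofReal (t ^ (s-1) * Real.exp (-((1 + ‖z‖^2) * t))) ∂ν)
                * ∫⁻ u, ENNReal.ofReal (u ^ (p-1) * Real.exp (-(‖X - z‖^2 * u))) ∂ν := by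
              rw [hν_def, lint_gamma hs h1z, lint_gamma hp (by positivity)]
          _ = ∫⁻ q, ENNReal.ofReal (q.1 ^ (s-1) * Real.exp (-((1 + ‖z‖^2) * q.1)))
                * ENNReal.ofReal (q.2 ^ (p-1) * Real.exp (-(‖X - z‖^2 * q.2)))
                ∂(ν.prod ν) := by
              exact (lintegral_prod_mul (by fun_prop) (by fun_prop)).symm
          _ = _ := by
              refine lintegral_congr_ae (hprod_ae.mono fun q hq => ?_)
              have h1 : (0:ℝ) < q.1 := hq.1
              have h2 : (0:ℝ) < q.2 := hq.2
              dsimp only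
              rw [← ENNReal.ofReal_mul (by positivity)]
              congr 1
              rw [show -((1 + ‖z‖^2) * q.1) = -q.1 + -(q.1 * ‖z‖^2) by ring, Real.exp_add,
                show -(q.1 * ‖z‖^2) - q.2 * ‖X - z‖^2
                  = -(q.1 * ‖z‖^2) + -(q.2 * ‖X - z‖^2) by ring, Real.exp_add,
                show -(‖X - z‖^2 * q.2) = -(q.2 * ‖X - z‖^2) by ring]
              ring
    _ = ∫⁻ q, (∫⁻ z : EuclideanSpace ℝ (Fin n),
          ENNReal.ofReal ((q.1 ^ (s-1) * q.2 ^ (p-1) * Real.exp (-q.1))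
            * Real.exp (-(q.1 * ‖z‖^2) - q.2 * ‖X - z‖^2))) ∂(ν.prod ν) := by
        exact lintegral_lintegral_swap (by fun_prop)
    _ = ∫⁻ q, ENNReal.ofReal (φ q.1 q.2) ∂(ν.prod ν) := by
        have hprod_ae : ∀ᵐ q : ℝ × ℝ ∂(ν.prod ν), q ∈ Ioi (0:ℝ) ×ˢ Ioi (0:ℝ) := by
          rw [hν_def, Measure.prod_restrict]
          exact ae_restrict_mem (measurableSet_Ioi.prod measurableSet_Ioi)
        refine lintegral_congr_ae (hprod_ae.mono fun q hq => ?_)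
        have h1 : (0:ℝ) < q.1 := hq.1
        have h2 : (0:ℝ) < q.2 := hq.2
        simp_rw [ENNReal.ofReal_mul (by positivity : (0:ℝ) ≤ q.1 ^ (s-1) * q.2 ^ (p-1)
          * Real.exp (-q.1))]
        rw [lintegral_const_mul' _ _ ENNReal.ofReal_ne_top, lint_gauss_conv h1 h2 X,
          ← ENNReal.ofReal_mul (by positivity)]
    _ = ∫⁻ t in Ioi (0:ℝ), ∫⁻ u in Ioi (0:ℝ), ENNReal.ofReal (φ t u) := by
        rw [hν_def] at *
        exact lintegral_prod _ (by fun_prop)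
    _ = ENNReal.ofReal (π ^ ((n:ℝ)/2))
          * ∫⁻ t in Ioi (0:ℝ), ∫⁻ v in Ioi (0:ℝ), ENNReal.ofReal (ψ t v) := by
        rw [← lintegral_const_mul' _ _ ENNReal.ofReal_ne_top]
        refine lintegral_congr_ae ((ae_restrict_mem measurableSet_Ioi).mono fun t htm => ?_)
        have ht : (0:ℝ) < t := htm
        have hφmeas : Measurable fun u => ENNReal.ofReal (φ t u) := by
          rw [hφ_def]; fun_prop
        dsimp only
        rw [lint_scale' ht (fun u => ENNReal.ofReal (φ t u)) hφmeas,
          ← lintegral_const_mul' _ _ ENNReal.ofReal_ne_top,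
          ← lintegral_const_mul' _ _ ENNReal.ofReal_ne_top]
        refine lintegral_congr_ae ((ae_restrict_mem measurableSet_Ioi).mono fun v hvm => ?_)
        have hv : (0:ℝ) < v := hvm
        have h1v : (0:ℝ) < 1 + v := by linarith
        dsimp only
        rw [← ENNReal.ofReal_mul ht.le, ← ENNReal.ofReal_mul (by positivity)]
        congr 1
        -- key real identity
        have e2 : t + t*v = t * (1+v) := by ring
        have e1 : (t*v) ^ (p-1) = t^(p-1) * v^(p-1) := Real.mul_rpow ht.le hv.le
        have e3 : (π / (t*(1+v))) ^ ((n:ℝ)/2)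
            = π ^ ((n:ℝ)/2) * (t ^ ((n:ℝ)/2))⁻¹ * ((1+v) ^ ((n:ℝ)/2))⁻¹ := by
          rw [Real.div_rpow pi_pos.le (by positivity), Real.mul_rpow ht.le h1v.le]
          field_simp
        have e5 : t * (t*v) / (t * (1+v)) * K = v*K/(1+v) * t := by
          field_simp
        have e6 : Real.exp (-((1 + v*K/(1+v)) * t))
            = Real.exp (-t) * Real.exp (-(v*K/(1+v) * t)) := by
          rw [← Real.exp_add]; congr 1; ring
        have e4 : t * (t ^ (s-1) * t ^ (p-1)) = t ^ ((n:ℝ)/2 - 1) * t ^ ((n:ℝ)/2) := by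
          rw [← Real.rpow_add ht, ← Real.rpow_add ht]
          nth_rewrite 1 [← Real.rpow_one t]
          rw [← Real.rpow_add ht]
          congr 1; linarith
        have e4' : t ^ ((n:ℝ)/2 - 1)
            = t * (t ^ (s-1) * t ^ (p-1)) * (t ^ ((n:ℝ)/2))⁻¹ := by
          rw [e4, mul_assoc, mul_inv_cancel₀ (ne_of_gt (Real.rpow_pos_of_pos ht _)), mul_one]
        rw [hφ_def, hψ_def]
        dsimp only
        rw [e1, e2, e3, e5, e6, Real.rpow_neg h1v.le, e4']
        ring
    _ = ENNReal.ofReal (π ^ ((n:ℝ)/2))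
          * ∫⁻ v in Ioi (0:ℝ), ∫⁻ t in Ioi (0:ℝ), ENNReal.ofReal (ψ t v) := by
        congr 1
        exact lintegral_lintegral_swap (by rw [hψ_def]; fun_prop)
    _ = ENNReal.ofReal (π ^ ((n:ℝ)/2) * Real.Gamma ((n:ℝ)/2))
          * ∫⁻ v in Ioi (0:ℝ), ENNReal.ofReal (v ^ (p-1) * (1 + (1+K)*v) ^ (-((n:ℝ)/2))) := by
        have hn2 : (0:ℝ) < (n:ℝ)/2 := by linarith
        rw [ENNReal.ofReal_mul (by positivity), mul_assoc]
        congr 1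
        rw [← lintegral_const_mul' _ _ ENNReal.ofReal_ne_top]
        refine lintegral_congr_ae ((ae_restrict_mem measurableSet_Ioi).mono fun v hvm => ?_)
        have hv : (0:ℝ) < v := hvm
        have h1v : (0:ℝ) < 1 + v := by linarith
        have hM : (0:ℝ) < 1 + v*K/(1+v) := by positivity
        dsimp only
        calc ∫⁻ t in Ioi (0:ℝ), ENNReal.ofReal (ψ t v)
            = ∫⁻ t in Ioi (0:ℝ),
                ENNReal.ofReal (t ^ ((n:ℝ)/2 - 1) * Real.exp (-((1 + v*K/(1+v)) * t)))
                * ENNReal.ofReal (v ^ (p-1) * (1+v) ^ (-((n:ℝ)/2))) := by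
              refine setLIntegral_congr_fun measurableSet_Ioi
                (fun t htm => ?_)
              have ht : (0:ℝ) < t := htm
              rw [hψ_def]
              dsimp only
              rw [← ENNReal.ofReal_mul (by positivity)]
          _ = ENNReal.ofReal (Real.Gamma ((n:ℝ)/2) * (1 + v*K/(1+v)) ^ (-((n:ℝ)/2)))
                * ENNReal.ofReal (v ^ (p-1) * (1+v) ^ (-((n:ℝ)/2))) := by
              rw [lintegral_mul_const' _ _ ENNReal.ofReal_ne_top, lint_gamma hn2 hM]
          _ = ENNReal.ofReal (Real.Gamma ((n:ℝ)/2))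
                * ENNReal.ofReal (v ^ (p-1) * (1 + (1+K)*v) ^ (-((n:ℝ)/2))) := by
              rw [← ENNReal.ofReal_mul (by positivity), ← ENNReal.ofReal_mul (by positivity)]
              congr 1
              have hb : (0:ℝ) < 1 + (1+K)*v := by positivity
              have hM_eq : 1 + v*K/(1+v) = (1 + (1+K)*v)/(1+v) := by field_simp; ring
              have hz1 : (1+v) ^ ((n:ℝ)/2) ≠ 0 := ne_of_gt (Real.rpow_pos_of_pos h1v _)
              have hz2 : (1 + (1+K)*v) ^ ((n:ℝ)/2) ≠ 0 :=
                ne_of_gt (Real.rpow_pos_of_pos hb _)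
              rw [hM_eq, Real.rpow_neg (by positivity), Real.div_rpow hb.le h1v.le,
                Real.rpow_neg h1v.le, Real.rpow_neg hb.le]
              field_simp
    _ = ENNReal.ofReal (π ^ ((n:ℝ)/2) * Real.Gamma ((n:ℝ)/2))
          * (ENNReal.ofReal ((1+K) ^ (-p)) * ENNReal.ofReal Breal) := by
        congr 1
        have hb : (0:ℝ) < 1 + K := by linarith
        have hfm : Measurable fun w : ℝ =>
            ENNReal.ofReal (w ^ (p-1) * (1+w) ^ (-((n:ℝ)/2))) := by fun_prop
        have h1 := lint_scale hb _ hfm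
        have h2 : ∫⁻ v in Ioi (0:ℝ),
              ENNReal.ofReal (((1+K)*v) ^ (p-1) * (1+(1+K)*v) ^ (-((n:ℝ)/2)))
            = ENNReal.ofReal ((1+K) ^ (p-1))
              * ∫⁻ v in Ioi (0:ℝ),
                  ENNReal.ofReal (v ^ (p-1) * (1+(1+K)*v) ^ (-((n:ℝ)/2))) := by
          rw [← lintegral_const_mul' _ _ ENNReal.ofReal_ne_top]
          refine setLIntegral_congr_fun measurableSet_Ioi
            (fun v hv => ?_)
          have hv0 : (0:ℝ) < v := hv
          rw [Real.mul_rpow hb.le hv0.le, ← ENNReal.ofReal_mul (by positivity)]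
          ring_nf
        have h3 : ENNReal.ofReal ((1+K) ^ (p-1))
              * ∫⁻ v in Ioi (0:ℝ),
                  ENNReal.ofReal (v ^ (p-1) * (1+(1+K)*v) ^ (-((n:ℝ)/2)))
            = ENNReal.ofReal (1+K)⁻¹ * ENNReal.ofReal Breal := by
          rw [← h2, h1, beta_lint hp hpn]
        have hcancel : ENNReal.ofReal ((1+K) ^ (-(p-1)))
            * ENNReal.ofReal ((1+K) ^ (p-1)) = 1 := by
          rw [← ENNReal.ofReal_mul (by positivity), ← Real.rpow_add hb,
            neg_add_cancel, Real.rpow_zero, ENNReal.ofReal_one]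
        calc ∫⁻ v in Ioi (0:ℝ), ENNReal.ofReal (v ^ (p-1) * (1+(1+K)*v) ^ (-((n:ℝ)/2)))
            = (ENNReal.ofReal ((1+K) ^ (-(p-1))) * ENNReal.ofReal ((1+K) ^ (p-1)))
                * ∫⁻ v in Ioi (0:ℝ),
                    ENNReal.ofReal (v ^ (p-1) * (1+(1+K)*v) ^ (-((n:ℝ)/2))) := by
              rw [hcancel, one_mul]
          _ = ENNReal.ofReal ((1+K) ^ (-(p-1)))
                * (ENNReal.ofReal (1+K)⁻¹ * ENNReal.ofReal Breal) := by
              rw [mul_assoc, h3]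
          _ = ENNReal.ofReal ((1+K) ^ (-p)) * ENNReal.ofReal Breal := by
              rw [← mul_assoc, ← ENNReal.ofReal_mul (by positivity)]
              congr 2
              rw [← Real.rpow_neg_one (1+K), ← Real.rpow_add hb]
              congr 1; ring
    _ = ENNReal.ofReal (Real.Gamma s * Real.Gamma p)
          * ENNReal.ofReal
            ((π ^ ((n:ℝ)/2) * Real.Gamma ((n:ℝ)/2) * Breal
              / (Real.Gamma s * Real.Gamma p)) * (1 + K) ^ (-p)) := by
        rw [← ENNReal.ofReal_mul (by positivity), ← ENNReal.ofReal_mul (by positivity),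
          ← ENNReal.ofReal_mul (by positivity)]
        congr 1
        field_simp


/-- The standard bubble `δ_{(a,λ)}(x) = λ^{(n−2)/2}/(1+λ²|x−a|²)^{(n−2)/2}`. -/
def bubble (n : ℕ) (a : EuclideanSpace ℝ (Fin n)) (l : ℝ)
    (x : EuclideanSpace ℝ (Fin n)) : ℝ :=
  l ^ (((n : ℝ) - 2) / 2) / (1 + l ^ 2 * ‖x - a‖ ^ 2) ^ (((n : ℝ) - 2) / 2)

/-- There is a constant `c_{n,μ} > 0` such that
`∫_{ℝⁿ} δ_{(a,λ)}(y)^{2*_μ} |x−y|^{−μ} dy = c_{n,μ} δ_{(a,λ)}(x)^{μ/(n−2)}`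
for all `a`, `λ > 0` and `x`. -/
theorem bubble_riesz_potential (n : ℕ) (hn : 3 ≤ n) (μ : ℝ) (hμ0 : 0 < μ) (hμn : μ < n) :
    ∃ c : ℝ, 0 < c ∧
      ∀ (a : EuclideanSpace ℝ (Fin n)) (l : ℝ), 0 < l →
        ∀ x : EuclideanSpace ℝ (Fin n),
          (∫ y, bubble n a l y ^ ((2 * (n : ℝ) - μ) / ((n : ℝ) - 2)) * ‖x - y‖ ^ (-μ)) =
            c * bubble n a l x ^ (μ / ((n : ℝ) - 2)) := by
  have hn3 : (3:ℝ) ≤ (n:ℝ) := by exact_mod_cast hn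
  have hn2 : ((n:ℝ) - 2) ≠ 0 := by linarith
  have hμn' : μ < (n:ℝ) := hμn
  set C : ℝ := π ^ ((n:ℝ)/2) * Real.Gamma ((n:ℝ)/2)
      * (∫ w in Ioi (0:ℝ), w ^ (μ/2 - 1) * (1 + w) ^ (-((n:ℝ)/2)))
      / (Real.Gamma ((n:ℝ) - μ/2) * Real.Gamma (μ/2)) with hC_def
  have hCpos : 0 < C := by
    have h1 := Real.Gamma_pos_of_pos (show (0:ℝ) < (n:ℝ) - μ/2 by linarith)
    have h2 := Real.Gamma_pos_of_pos (show (0:ℝ) < μ/2 by linarith)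
    have h3 := Real.Gamma_pos_of_pos (show (0:ℝ) < (n:ℝ)/2 by linarith)
    have h4 := beta_pos (show (0:ℝ) < μ/2 by linarith) (show μ/2 < (n:ℝ)/2 by linarith)
    exact div_pos (mul_pos (mul_pos (Real.rpow_pos_of_pos pi_pos _) h3) h4) (mul_pos h1 h2)
  refine ⟨C, hCpos, fun a l hl x => ?_⟩
  set X : EuclideanSpace ℝ (Fin n) := l • (x - a) with hX_def
  have hbub : ∀ (y : EuclideanSpace ℝ (Fin n)) (e : ℝ),
      bubble n a l y ^ e
        = l ^ (((n:ℝ)-2)/2 * e) * (1 + l^2*‖y-a‖^2) ^ (-(((n:ℝ)-2)/2 * e)) := by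
    intro y e
    have hB : (0:ℝ) < 1 + l^2*‖y-a‖^2 := by positivity
    rw [bubble, Real.div_rpow (by positivity) (by positivity),
      ← Real.rpow_mul hl.le, ← Real.rpow_mul hB.le, Real.rpow_neg hB.le, div_eq_mul_inv]
  have he₁ : ((n:ℝ)-2)/2 * ((2*(n:ℝ)-μ)/((n:ℝ)-2)) = (n:ℝ) - μ/2 := by
    field_simp
  have he₂ : ((n:ℝ)-2)/2 * (μ/((n:ℝ)-2)) = μ/2 := by
    field_simp
  have hxa : l^2*‖x-a‖^2 = ‖X‖^2 := by
    rw [hX_def, norm_smul, Real.norm_eq_abs, abs_of_pos hl, mul_pow]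
  -- the inner function
  set g : EuclideanSpace ℝ (Fin n) → ℝ :=
    fun y => (1 + l^2*‖y-a‖^2) ^ (-((n:ℝ) - μ/2)) * ‖x-y‖ ^ (-μ) with hg_def
  set h : EuclideanSpace ℝ (Fin n) → ℝ :=
    fun z => (1 + ‖z‖^2) ^ (-((n:ℝ) - μ/2)) * ‖X - z‖ ^ (-μ) with hh_def
  have hpt : ∀ z : EuclideanSpace ℝ (Fin n), g (a + l⁻¹ • z) = l^μ * h z := by
    intro z
    have h1 : l^2 * ‖(a + l⁻¹ • z) - a‖^2 = ‖z‖^2 := by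
      rw [add_sub_cancel_left, norm_smul, Real.norm_eq_abs, abs_of_pos (inv_pos.2 hl),
        mul_pow]
      field_simp
    have h2 : x - (a + l⁻¹ • z) = l⁻¹ • (X - z) := by
      rw [hX_def, smul_sub, smul_smul, inv_mul_cancel₀ hl.ne', one_smul]
      abel
    rw [hg_def, hh_def]
    dsimp only
    rw [h1, h2, norm_smul, Real.norm_eq_abs, abs_of_pos (inv_pos.2 hl),
      Real.mul_rpow (by positivity) (norm_nonneg _), Real.inv_rpow hl.le,
      Real.rpow_neg hl.le, inv_inv]
    ring
  have hint : ∫ z, h z = C * (1 + ‖X‖^2) ^ (-(μ/2)) := by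
    rw [hh_def]
    rw [MeasureTheory.integral_eq_lintegral_of_nonneg_ae
      (Filter.Eventually.of_forall fun z => by positivity)
      (Measurable.aestronglyMeasurable (by fun_prop))]
    rw [core_one n hn hμ0 hμn' X, ENNReal.toReal_ofReal
      (le_of_lt (mul_pos hCpos (Real.rpow_pos_of_pos (by positivity) _)))]
  have hcv : ∫ y, g y = ((l:ℝ)^(n:ℕ))⁻¹ * ∫ z, g (a + l⁻¹ • z) := by
    have h5 : ∫ z, g (a + l⁻¹ • z)
        = |((l⁻¹)^(Module.finrank ℝ (EuclideanSpace ℝ (Fin n))))⁻¹| • ∫ z, g (a + z) :=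
      Measure.integral_comp_smul volume (fun z => g (a + z)) l⁻¹
    rw [integral_add_left_eq_self (fun y => g y) a] at h5
    rw [h5, finrank_euclideanSpace_fin, smul_eq_mul, ← mul_assoc]
    rw [inv_pow, inv_inv, abs_of_pos (by positivity)]
    field_simp
  -- LHS computation
  have hLHS : (∫ y, bubble n a l y ^ ((2 * (n:ℝ) - μ) / ((n:ℝ) - 2)) * ‖x - y‖ ^ (-μ))
      = l ^ ((n:ℝ) - μ/2) * (((l:ℝ)^(n:ℕ))⁻¹ * (l^μ * (C * (1 + ‖X‖^2) ^ (-(μ/2))))) := by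
    have : (∫ y, bubble n a l y ^ ((2 * (n:ℝ) - μ) / ((n:ℝ) - 2)) * ‖x - y‖ ^ (-μ))
        = ∫ y, l ^ ((n:ℝ) - μ/2) * g y := by
      refine integral_congr_ae (Filter.Eventually.of_forall fun y => ?_)
      dsimp only
      rw [hbub y, he₁]
      simp only [hg_def]
      ring
    rw [this, MeasureTheory.integral_const_mul, hcv]
    congr 1
    have : ∫ z, g (a + l⁻¹ • z) = ∫ z, l^μ * h z := by
      exact integral_congr_ae (Filter.Eventually.of_forall fun z => hpt z)
    rw [this, MeasureTheory.integral_const_mul, hint]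
  rw [hLHS, hbub x, he₂, hxa]
  have hpow : l ^ ((n:ℝ) - μ/2) * (((l:ℝ)^(n:ℕ))⁻¹ * l^μ) = l ^ (μ/2) := by
    rw [← Real.rpow_natCast l n, ← Real.rpow_neg hl.le, ← Real.rpow_add hl, ← Real.rpow_add hl]
    congr 1; ring
  calc l ^ ((n:ℝ) - μ/2) * (((l:ℝ)^(n:ℕ))⁻¹ * (l^μ * (C * (1 + ‖X‖^2) ^ (-(μ/2)))))
      = (l ^ ((n:ℝ) - μ/2) * (((l:ℝ)^(n:ℕ))⁻¹ * l^μ)) * (C * (1 + ‖X‖^2) ^ (-(μ/2))) := by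
        ring
    _ = C * (l ^ (μ/2) * (1 + ‖X‖^2) ^ (-(μ/2))) := by rw [hpow]; ring
end
end

section
/- Let n ≥ 3 and let a₁, a₂ ∈ ℝⁿ with a₁ ≠ a₂. Then, as λ → ∞, (λ |a₁−a₂|)^{n−2} · ∫_{ℝⁿ} δ_{(a₁,λ)}(x)^{(n+2)/(n−2)} δ_{(a₂,λ)}(x) dx → c₁, where c₁ = ∫_{ℝⁿ} (1+|x|²)^{−(n+2)/2} dx. -/
open MeasureTheory Filter

noncomputable section

set_option maxHeartbeats 1000000 in

lemma integrable_inner_bound (m : ℕ) {r : ℝ} (hr : (m : ℝ) < r)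
    (u : EuclideanSpace ℝ (Fin (m + 1))) (hu : ‖u‖ = 1) :
    Integrable (fun y : EuclideanSpace ℝ (Fin (m + 1)) =>
      (1 + (inner ℝ u y : ℝ) ^ 2)⁻¹ * (1 + (‖y‖ ^ 2 - (inner ℝ u y : ℝ) ^ 2)) ^ (-r / 2)) := by
  have hcard : Module.finrank ℝ (EuclideanSpace ℝ (Fin (m + 1))) = Fintype.card (Fin (m + 1)) := by
    simp [finrank_euclideanSpace_fin]
  haveI : Subsingleton (({0} : Set (Fin (m + 1)))) := Set.subsingleton_singleton.coe_sort
  have horth : Orthonormal ℝ (Set.restrict {(0 : Fin (m + 1))} (fun _ => u)) := by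
    constructor
    · intro i; simpa [Set.restrict] using hu
    · intro i j hij; exact absurd (Subsingleton.elim i j) hij
  obtain ⟨b, hb⟩ := horth.exists_orthonormalBasis_extension_of_card_eq hcard
  have hb0 : b 0 = u := hb 0 rfl
  -- integrability on the second factor
  have hg : Integrable (fun w : Fin m → ℝ => (1 + ∑ j, (w j) ^ 2) ^ (-r / 2)) := by
    have hco : (fun w : Fin m → ℝ => (1 + ∑ j, (w j) ^ 2) ^ (-r / 2)) ∘
        ((MeasurableEquiv.toLp 2 (Fin m → ℝ)).symm) =
        fun x : EuclideanSpace ℝ (Fin m) => (1 + ‖x‖ ^ 2) ^ (-r / 2) := by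
      funext x
      have : ‖x‖ ^ 2 = ∑ j, (x j) ^ 2 := by
        rw [EuclideanSpace.norm_eq, Real.sq_sqrt (by positivity)]
        simp [sq_abs]
      simp only [Function.comp_apply, this]
      rfl
    refine ((EuclideanSpace.volume_preserving_symm_measurableEquiv_toLp (Fin m)).integrable_comp_emb
      (MeasurableEquiv.measurableEmbedding _)).1 ?_
    rw [hco]
    refine integrable_rpow_neg_one_add_norm_sq ?_
    rw [finrank_euclideanSpace_fin]
    exact hr
  have key : Integrable (fun p : ℝ × (Fin m → ℝ) =>
      (1 + p.1 ^ 2)⁻¹ * ((1 + ∑ j, (p.2 j) ^ 2) ^ (-r / 2))) (volume.prod volume) :=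
    integrable_inv_one_add_sq.mul_prod hg
  -- pull back through piFinSuccAbove
  have key2 : Integrable (fun f : Fin (m + 1) → ℝ =>
      (1 + (f 0) ^ 2)⁻¹ * ((1 + ∑ j : Fin m, (f (Fin.succ j)) ^ 2) ^ (-r / 2))) := by
    rw [← Measure.volume_eq_prod ℝ (Fin m → ℝ)] at key
    have := ((volume_preserving_piFinSuccAbove (fun _ : Fin (m + 1) => ℝ) 0).integrable_comp_emb
      (MeasurableEquiv.measurableEmbedding _)).2 key
    simpa [Function.comp_def, Fin.succAbove_zero, Fin.tail] using this
  -- pull back to EuclideanSpace (Fin (m+1))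
  have key3 : Integrable (fun x : EuclideanSpace ℝ (Fin (m + 1)) =>
      (1 + (x 0) ^ 2)⁻¹ * ((1 + (‖x‖ ^ 2 - (x 0) ^ 2)) ^ (-r / 2))) := by
    have := ((EuclideanSpace.volume_preserving_symm_measurableEquiv_toLp (Fin (m + 1))).integrable_comp_emb
      (MeasurableEquiv.measurableEmbedding _)).2 key2
    have hco : (fun f : Fin (m + 1) → ℝ =>
        (1 + (f 0) ^ 2)⁻¹ * ((1 + ∑ j : Fin m, (f (Fin.succ j)) ^ 2) ^ (-r / 2))) ∘
        ((MeasurableEquiv.toLp 2 (Fin (m + 1) → ℝ)).symm) =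
        fun x : EuclideanSpace ℝ (Fin (m + 1)) =>
        (1 + (x 0) ^ 2)⁻¹ * ((1 + (‖x‖ ^ 2 - (x 0) ^ 2)) ^ (-r / 2)) := by
      funext x
      have hn : ‖x‖ ^ 2 = ∑ j, (x j) ^ 2 := by
        rw [EuclideanSpace.norm_eq, Real.sq_sqrt (by positivity)]
        simp [sq_abs]
      have hs : ∑ j : Fin (m + 1), (x j) ^ 2 = (x 0) ^ 2 + ∑ j : Fin m, (x (Fin.succ j)) ^ 2 :=
        Fin.sum_univ_succ _
      simp only [Function.comp_apply, hn, hs]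
      ring_nf
      rfl
    rwa [hco] at this
  -- pull back through the orthonormal basis
  have := (b.measurePreserving_repr.integrable_comp_emb
    b.measurableEquiv.measurableEmbedding).2 key3
  have hco : (fun x : EuclideanSpace ℝ (Fin (m + 1)) =>
      (1 + (x 0) ^ 2)⁻¹ * ((1 + (‖x‖ ^ 2 - (x 0) ^ 2)) ^ (-r / 2))) ∘ (b.repr) =
      fun y => (1 + (inner ℝ u y : ℝ) ^ 2)⁻¹ *
        (1 + (‖y‖ ^ 2 - (inner ℝ u y : ℝ) ^ 2)) ^ (-r / 2) := by
    funext y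
    have h1 : b.repr y 0 = (inner ℝ u y : ℝ) := by rw [b.repr_apply_apply, hb0]
    have h2 : ‖b.repr y‖ = ‖y‖ := b.repr.norm_map y
    simp only [Function.comp_apply, h1, h2]
  rwa [hco] at this

set_option maxHeartbeats 1000000 in
lemma bubble_cov (n : ℕ) (hn : 3 ≤ n) (a₁ a₂ : EuclideanSpace ℝ (Fin n))
    {l : ℝ} (hl : 0 < l) :
    (l * ‖a₁ - a₂‖) ^ ((n : ℝ) - 2) *
      ∫ x, bubble n a₁ l x ^ (((n : ℝ) + 2) / ((n : ℝ) - 2)) * bubble n a₂ l x =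
    ∫ y : EuclideanSpace ℝ (Fin n), (l * ‖a₁ - a₂‖) ^ ((n : ℝ) - 2) *
      ((1 + ‖y‖ ^ 2) ^ (-(((n : ℝ) + 2) / 2)) *
        (1 + ‖l • (a₁ - a₂) + y‖ ^ 2) ^ (-(((n : ℝ) - 2) / 2))) := by
  have hn2 : (0 : ℝ) < (n : ℝ) - 2 := by
    have : (3 : ℝ) ≤ (n : ℝ) := by exact_mod_cast hn
    linarith
  have hqp : (((n : ℝ) - 2) / 2) * (((n : ℝ) + 2) / ((n : ℝ) - 2)) = ((n : ℝ) + 2) / 2 := by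
    field_simp
  have hl' : l ≠ 0 := hl.ne'
  -- pointwise computation
  have h1 : ∀ y : EuclideanSpace ℝ (Fin n),
      bubble n a₁ l (a₁ + l⁻¹ • y) ^ (((n : ℝ) + 2) / ((n : ℝ) - 2)) * bubble n a₂ l (a₁ + l⁻¹ • y) =
      l ^ (n : ℕ) * ((1 + ‖y‖ ^ 2) ^ (-(((n : ℝ) + 2) / 2)) *
        (1 + ‖l • (a₁ - a₂) + y‖ ^ 2) ^ (-(((n : ℝ) - 2) / 2))) := by
    intro y
    have e1 : a₁ + l⁻¹ • y - a₁ = l⁻¹ • y := add_sub_cancel_left a₁ _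
    have e2 : a₁ + l⁻¹ • y - a₂ = l⁻¹ • (l • (a₁ - a₂) + y) := by
      rw [smul_add, smul_smul, inv_mul_cancel₀ hl', one_smul]
      abel
    have hnorm : ∀ z : EuclideanSpace ℝ (Fin n),
        1 + l ^ 2 * ‖l⁻¹ • z‖ ^ 2 = 1 + ‖z‖ ^ 2 := by
      intro z
      rw [norm_smul, mul_pow, Real.norm_eq_abs, sq_abs]
      field_simp
    have hA : (0:ℝ) < 1 + ‖y‖ ^ 2 := by positivity
    have hB : (0:ℝ) < 1 + ‖l • (a₁ - a₂) + y‖ ^ 2 := by positivity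
    rw [bubble, bubble, e1, e2, hnorm, hnorm]
    rw [Real.div_rpow (Real.rpow_nonneg hl.le _) (Real.rpow_nonneg hA.le _)]
    rw [← Real.rpow_mul hl.le, ← Real.rpow_mul hA.le, hqp]
    rw [div_mul_div_comm, ← Real.rpow_add hl]
    have : ((n : ℝ) + 2) / 2 + ((n : ℝ) - 2) / 2 = (n : ℝ) := by ring
    rw [this, Real.rpow_natCast]
    rw [Real.rpow_neg hA.le, Real.rpow_neg hB.le]
    rw [div_eq_mul_inv, mul_inv]
  -- change of variables
  have finr : Module.finrank ℝ (EuclideanSpace ℝ (Fin n)) = n := finrank_euclideanSpace_fin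
  set I : EuclideanSpace ℝ (Fin n) → ℝ :=
    fun x => bubble n a₁ l x ^ (((n : ℝ) + 2) / ((n : ℝ) - 2)) * bubble n a₂ l x with hI
  have step1 : ∫ x, I x = ∫ x, I (a₁ + x) := by
    rw [integral_add_left_eq_self]
  have step2 : ∫ x, I (a₁ + l⁻¹ • x) = l ^ (n : ℕ) • ∫ x, I (a₁ + x) := by
    have := Measure.integral_comp_inv_smul_of_nonneg (volume : Measure (EuclideanSpace ℝ (Fin n)))
      (fun x => I (a₁ + x)) hl.le
    rw [finr] at this
    exact this
  have hln : (0:ℝ) < l ^ (n : ℕ) := pow_pos hl n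
  have step3 : ∫ x, I x = (l ^ (n : ℕ))⁻¹ * ∫ x, I (a₁ + l⁻¹ • x) := by
    rw [step2, smul_eq_mul, step1]
    field_simp
  have step4 : ∫ x, I (a₁ + l⁻¹ • x) = l ^ (n : ℕ) * ∫ y : EuclideanSpace ℝ (Fin n),
      ((1 + ‖y‖ ^ 2) ^ (-(((n : ℝ) + 2) / 2)) *
        (1 + ‖l • (a₁ - a₂) + y‖ ^ 2) ^ (-(((n : ℝ) - 2) / 2))) := by
    rw [← integral_const_mul]
    exact integral_congr_ae (Filter.Eventually.of_forall fun y => h1 y)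
  rw [step3, step4, inv_mul_cancel_left₀ hln.ne', integral_const_mul]

set_option maxHeartbeats 1000000 in

lemma bubble_bound (n : ℕ) (hn : 3 ≤ n) {Δ : EuclideanSpace ℝ (Fin n)} (hΔ : Δ ≠ 0)
    {l : ℝ} (hl : 0 < l) (y : EuclideanSpace ℝ (Fin n)) :
    (l * ‖Δ‖) ^ ((n : ℝ) - 2) * ((1 + ‖y‖ ^ 2) ^ (-(((n : ℝ) + 2) / 2)) *
      (1 + ‖l • Δ + y‖ ^ 2) ^ (-(((n : ℝ) - 2) / 2)))
    ≤ 2 ^ ((n : ℝ) - 2) *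
      ((1 + (inner ℝ (‖Δ‖⁻¹ • Δ) y : ℝ) ^ 2)⁻¹ *
        (1 + (‖y‖ ^ 2 - (inner ℝ (‖Δ‖⁻¹ • Δ) y : ℝ) ^ 2)) ^ (-(n : ℝ) / 2)
       + (1 + ‖y‖ ^ 2) ^ (-(((n : ℝ) + 2) / 2))) := by
  have hn2 : (0 : ℝ) ≤ (n : ℝ) - 2 := by
    have : (3 : ℝ) ≤ (n : ℝ) := by exact_mod_cast hn
    linarith
  have hd : (0 : ℝ) < ‖Δ‖ := norm_pos_iff.2 hΔ
  set u : EuclideanSpace ℝ (Fin n) := ‖Δ‖⁻¹ • Δ with hu_def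
  have hu : ‖u‖ = 1 := norm_smul_inv_norm hΔ
  set R : ℝ := l * ‖Δ‖ with hR_def
  have hR : 0 < R := mul_pos hl hd
  set s : ℝ := (inner ℝ u y : ℝ) with hs_def
  have hlΔ : l • Δ = R • u := by
    rw [hR_def, hu_def, smul_smul, mul_assoc, mul_inv_cancel₀ hd.ne', mul_one]
  have hs2 : s ^ 2 ≤ ‖y‖ ^ 2 := by
    have h1 : |s| ≤ ‖u‖ * ‖y‖ := abs_real_inner_le_norm u y
    rw [hu, one_mul] at h1
    calc s ^ 2 = |s| ^ 2 := (sq_abs s).symm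
    _ ≤ ‖y‖ ^ 2 := by gcongr
  set A : ℝ := 1 + ‖y‖ ^ 2 with hA_def
  set B : ℝ := 1 + ‖l • Δ + y‖ ^ 2 with hB_def
  set Q : ℝ := 1 + (‖y‖ ^ 2 - s ^ 2) with hQ_def
  set S : ℝ := 1 + s ^ 2 with hS_def
  have hA : (0:ℝ) < A := by positivity
  have hB : (0:ℝ) < B := by positivity
  have hQ : (0:ℝ) < Q := by rw [hQ_def]; nlinarith
  have hS : (0:ℝ) < S := by positivity
  have hQA : Q ≤ A := by rw [hQ_def, hA_def]; nlinarith
  have hSA : S ≤ A := by rw [hS_def, hA_def]; linarith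
  have hQB : Q ≤ B := by
    rw [hQ_def, hB_def, hlΔ]
    have hexp : ‖R • u + y‖ ^ 2 = R ^ 2 + 2 * R * s + ‖y‖ ^ 2 := by
      rw [norm_add_sq_real, norm_smul, Real.norm_eq_abs, abs_of_pos hR, hu, mul_one,
        real_inner_smul_left, ← hs_def, mul_pow]
      ring
    nlinarith [sq_nonneg (R + s)]
  have hterm2 : (0:ℝ) ≤ (1 + ‖y‖ ^ 2) ^ (-(((n : ℝ) + 2) / 2)) := Real.rpow_nonneg hA.le _
  have hterm1 : (0:ℝ) ≤ S⁻¹ * Q ^ (-(n : ℝ) / 2) := by positivity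
  rcases le_or_gt R (2 * ‖y‖) with hcase | hcase
  · -- R ≤ 2‖y‖ : use the first term
    have h1 : R ^ ((n : ℝ) - 2) ≤ 2 ^ ((n : ℝ) - 2) * A ^ (((n : ℝ) - 2) / 2) := by
      calc R ^ ((n : ℝ) - 2) ≤ (2 * ‖y‖) ^ ((n : ℝ) - 2) :=
            Real.rpow_le_rpow hR.le hcase hn2
      _ = 2 ^ ((n : ℝ) - 2) * ‖y‖ ^ ((n : ℝ) - 2) :=
            Real.mul_rpow (by norm_num) (norm_nonneg y)
      _ ≤ 2 ^ ((n : ℝ) - 2) * A ^ (((n : ℝ) - 2) / 2) := by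
            gcongr 2 ^ ((n : ℝ) - 2) * ?_
            have : ‖y‖ ^ ((n : ℝ) - 2) = (‖y‖ ^ 2) ^ (((n : ℝ) - 2) / 2) := by
              rw [← Real.rpow_natCast ‖y‖ 2, ← Real.rpow_mul (norm_nonneg y)]
              congr 1
              push_cast
              ring
            rw [this]
            exact Real.rpow_le_rpow (by positivity) (by rw [hA_def]; linarith) (by linarith)
    have h2 : B ^ (-(((n : ℝ) - 2) / 2)) ≤ Q ^ (-(((n : ℝ) - 2) / 2)) :=
      Real.rpow_le_rpow_of_nonpos hQ hQB (by linarith)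
    have h3 : A ^ (((n : ℝ) - 2) / 2) * A ^ (-(((n : ℝ) + 2) / 2)) = A ^ (-(2:ℝ)) := by
      rw [← Real.rpow_add hA]
      congr 1
      ring
    have hA2 : A ^ ((2:ℝ)) = A * A := by
      rw [show (2:ℝ) = ((2:ℕ):ℝ) by norm_num, Real.rpow_natCast]
      ring
    have h4 : A ^ (-(2:ℝ)) ≤ S⁻¹ * Q⁻¹ := by
      rw [Real.rpow_neg hA.le, hA2, ← mul_inv]
      exact inv_anti₀ (by positivity) (mul_le_mul hSA hQA hQ.le hA.le)
    have h5 : Q⁻¹ * Q ^ (-(((n : ℝ) - 2) / 2)) = Q ^ (-(n : ℝ) / 2) := by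
      rw [← Real.rpow_neg_one Q, ← Real.rpow_add hQ]
      congr 1
      ring
    calc R ^ ((n : ℝ) - 2) * (A ^ (-(((n : ℝ) + 2) / 2)) * B ^ (-(((n : ℝ) - 2) / 2)))
        ≤ (2 ^ ((n : ℝ) - 2) * A ^ (((n : ℝ) - 2) / 2)) *
          (A ^ (-(((n : ℝ) + 2) / 2)) * Q ^ (-(((n : ℝ) - 2) / 2))) := by
          apply mul_le_mul h1 _ (by positivity) (by positivity)
          exact mul_le_mul_of_nonneg_left h2 (Real.rpow_nonneg hA.le _)
      _ = 2 ^ ((n : ℝ) - 2) * (A ^ (-(2:ℝ)) * Q ^ (-(((n : ℝ) - 2) / 2))) := by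
          rw [← h3]; ring
      _ ≤ 2 ^ ((n : ℝ) - 2) * ((S⁻¹ * Q⁻¹) * Q ^ (-(((n : ℝ) - 2) / 2))) := by
          have hq0 : (0:ℝ) ≤ Q ^ (-(((n : ℝ) - 2) / 2)) := Real.rpow_nonneg hQ.le _
          have h2n : (0:ℝ) ≤ (2:ℝ) ^ ((n : ℝ) - 2) := Real.rpow_nonneg (by norm_num) _
          exact mul_le_mul_of_nonneg_left (mul_le_mul_of_nonneg_right h4 hq0) h2n
      _ = 2 ^ ((n : ℝ) - 2) * (S⁻¹ * Q ^ (-(n : ℝ) / 2)) := by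
          rw [mul_assoc, h5]
      _ ≤ 2 ^ ((n : ℝ) - 2) * (S⁻¹ * Q ^ (-(n : ℝ) / 2) + A ^ (-(((n : ℝ) + 2) / 2))) := by
          gcongr
          linarith
  · -- 2‖y‖ < R : use the second term
    have hRy : R / 2 ≤ ‖l • Δ + y‖ := by
      have h1 : ‖R • u‖ ≤ ‖R • u + y‖ + ‖y‖ := by
        calc ‖R • u‖ = ‖(R • u + y) - y‖ := by rw [add_sub_cancel_right]
        _ ≤ ‖R • u + y‖ + ‖y‖ := norm_sub_le _ _
      have h2 : ‖R • u‖ = R := by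
        rw [norm_smul, Real.norm_eq_abs, abs_of_pos hR, hu, mul_one]
      rw [hlΔ]
      linarith
    have hB2 : (R / 2) ^ 2 ≤ B := by
      have h0 : (0:ℝ) ≤ R / 2 := by positivity
      have := pow_le_pow_left₀ h0 hRy 2
      rw [hB_def]
      nlinarith
    have h2 : B ^ (-(((n : ℝ) - 2) / 2)) ≤ ((R / 2) ^ 2) ^ (-(((n : ℝ) - 2) / 2)) :=
      Real.rpow_le_rpow_of_nonpos (by positivity) hB2 (by linarith)
    have h3 : R ^ ((n : ℝ) - 2) * ((R / 2) ^ 2) ^ (-(((n : ℝ) - 2) / 2)) = 2 ^ ((n : ℝ) - 2) := by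
      rw [← Real.rpow_natCast (R / 2) 2, ← Real.rpow_mul (by positivity)]
      have : ((2:ℕ):ℝ) * (-(((n : ℝ) - 2) / 2)) = -((n:ℝ) - 2) := by push_cast; ring
      rw [this, Real.rpow_neg (by positivity), ← div_eq_mul_inv,
        ← Real.div_rpow hR.le (by positivity)]
      rw [show R / (R / 2) = 2 by field_simp]
    calc R ^ ((n : ℝ) - 2) * (A ^ (-(((n : ℝ) + 2) / 2)) * B ^ (-(((n : ℝ) - 2) / 2)))
        ≤ R ^ ((n : ℝ) - 2) * (A ^ (-(((n : ℝ) + 2) / 2)) * ((R / 2) ^ 2) ^ (-(((n : ℝ) - 2) / 2))) :=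
          mul_le_mul_of_nonneg_left
            (mul_le_mul_of_nonneg_left h2 (Real.rpow_nonneg hA.le _))
            (Real.rpow_nonneg hR.le _)
      _ = 2 ^ ((n : ℝ) - 2) * A ^ (-(((n : ℝ) + 2) / 2)) := by
          rw [← h3]; ring
      _ ≤ 2 ^ ((n : ℝ) - 2) * (S⁻¹ * Q ^ (-(n : ℝ) / 2) + A ^ (-(((n : ℝ) + 2) / 2))) := by
          gcongr
          linarith

set_option maxHeartbeats 1000000 in

lemma bubble_ptlimit (n : ℕ) (hn : 3 ≤ n) {Δ : EuclideanSpace ℝ (Fin n)} (hΔ : Δ ≠ 0)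
    (y : EuclideanSpace ℝ (Fin n)) :
    Tendsto (fun l : ℝ => (l * ‖Δ‖) ^ ((n : ℝ) - 2) *
        ((1 + ‖y‖ ^ 2) ^ (-(((n : ℝ) + 2) / 2)) *
          (1 + ‖l • Δ + y‖ ^ 2) ^ (-(((n : ℝ) - 2) / 2)))) atTop
      (nhds ((1 + ‖y‖ ^ 2) ^ (-(((n : ℝ) + 2) / 2)))) := by
  have hn2 : (0 : ℝ) ≤ (n : ℝ) - 2 := by
    have : (3 : ℝ) ≤ (n : ℝ) := by exact_mod_cast hn
    linarith
  have hd : (0 : ℝ) < ‖Δ‖ := norm_pos_iff.2 hΔ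
  set u : EuclideanSpace ℝ (Fin n) := ‖Δ‖⁻¹ • Δ with hu_def
  have hu : ‖u‖ = 1 := norm_smul_inv_norm hΔ
  set T : ℝ → ℝ := fun t => t ^ 2 + ‖u + t • y‖ ^ 2 with hT_def
  have hTcont : Continuous T := by
    apply Continuous.add
    · fun_prop
    · exact ((continuous_const.add (continuous_id.smul continuous_const)).norm).pow 2
  have hT0 : T 0 = 1 := by simp [hT_def, hu]
  have htt : Tendsto (fun l : ℝ => (l * ‖Δ‖)⁻¹) atTop (nhds 0) :=
    (tendsto_id.atTop_mul_const hd).inv_tendsto_atTop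
  have hT : Tendsto (fun l : ℝ => T ((l * ‖Δ‖)⁻¹)) atTop (nhds 1) := by
    rw [← hT0]
    exact (hTcont.tendsto 0).comp htt
  have hinv : Tendsto (fun l : ℝ => (T ((l * ‖Δ‖)⁻¹))⁻¹) atTop (nhds 1) := by
    simpa using hT.inv₀ one_ne_zero
  have hrpow : Tendsto (fun l : ℝ => ((T ((l * ‖Δ‖)⁻¹))⁻¹) ^ (((n : ℝ) - 2) / 2)) atTop
      (nhds 1) := by
    have := hinv.rpow_const (p := ((n : ℝ) - 2) / 2) (Or.inr (by linarith))
    simpa using this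
  have hmain : Tendsto (fun l : ℝ => (1 + ‖y‖ ^ 2) ^ (-(((n : ℝ) + 2) / 2)) *
      ((T ((l * ‖Δ‖)⁻¹))⁻¹) ^ (((n : ℝ) - 2) / 2)) atTop
      (nhds ((1 + ‖y‖ ^ 2) ^ (-(((n : ℝ) + 2) / 2)))) := by
    have := hrpow.const_mul ((1 + ‖y‖ ^ 2) ^ (-(((n : ℝ) + 2) / 2)))
    simpa using this
  refine hmain.congr' ?_
  filter_upwards [eventually_ge_atTop (1 : ℝ)] with l hl
  have hl0 : 0 < l := lt_of_lt_of_le one_pos hl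
  have hR : 0 < l * ‖Δ‖ := mul_pos hl0 hd
  have hB : (0:ℝ) < 1 + ‖l • Δ + y‖ ^ 2 := by positivity
  -- T ((l‖Δ‖)⁻¹) = (1 + ‖l•Δ+y‖²) / (l‖Δ‖)²
  have hsmul : u + (l * ‖Δ‖)⁻¹ • y = (l * ‖Δ‖)⁻¹ • (l • Δ + y) := by
    rw [smul_add, smul_smul, hu_def]
    congr 2
    field_simp
  have hTval : T ((l * ‖Δ‖)⁻¹) = (1 + ‖l • Δ + y‖ ^ 2) / (l * ‖Δ‖) ^ 2 := by
    rw [hT_def]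
    simp only [hsmul]
    rw [norm_smul, Real.norm_eq_abs, abs_of_pos (inv_pos.2 hR), mul_pow]
    field_simp
  have hkey : ((T ((l * ‖Δ‖)⁻¹))⁻¹) ^ (((n : ℝ) - 2) / 2) =
      (l * ‖Δ‖) ^ ((n : ℝ) - 2) * (1 + ‖l • Δ + y‖ ^ 2) ^ (-(((n : ℝ) - 2) / 2)) := by
    rw [hTval, inv_div]
    rw [Real.div_rpow (by positivity) hB.le]
    rw [← Real.rpow_natCast (l * ‖Δ‖) 2, ← Real.rpow_mul hR.le]
    rw [show ((2:ℕ):ℝ) * (((n : ℝ) - 2) / 2) = (n : ℝ) - 2 by push_cast; ring]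
    rw [Real.rpow_neg hB.le, div_eq_mul_inv]
  rw [hkey]
  ring

set_option maxHeartbeats 1000000 in
/-- The Bahri–Coron interaction estimate: for `a₁ ≠ a₂`, as `λ → ∞`,
`(λ|a₁−a₂|)^{n−2} ∫ δ_{(a₁,λ)}^{(n+2)/(n−2)} δ_{(a₂,λ)} → c₁ = ∫ (1+|x|²)^{−(n+2)/2}`. -/
theorem bubble_interaction_limit (n : ℕ) (hn : 3 ≤ n)
    (a₁ a₂ : EuclideanSpace ℝ (Fin n)) (h : a₁ ≠ a₂) :
    Tendsto (fun l : ℝ =>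
        (l * ‖a₁ - a₂‖) ^ ((n : ℝ) - 2) *
          ∫ x, bubble n a₁ l x ^ (((n : ℝ) + 2) / ((n : ℝ) - 2)) * bubble n a₂ l x)
      atTop
      (nhds (∫ x : EuclideanSpace ℝ (Fin n), (1 + ‖x‖ ^ 2) ^ (-(((n : ℝ) + 2) / 2)))) := by
  obtain ⟨m, rfl⟩ : ∃ m, n = m + 1 := ⟨n - 1, by omega⟩
  have hΔ : a₁ - a₂ ≠ 0 := sub_ne_zero.2 h
  have hd : (0 : ℝ) < ‖a₁ - a₂‖ := norm_pos_iff.2 hΔ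
  set u : EuclideanSpace ℝ (Fin (m + 1)) := ‖a₁ - a₂‖⁻¹ • (a₁ - a₂) with hu_def
  have hu : ‖u‖ = 1 := norm_smul_inv_norm hΔ
  -- the integrable bound
  have h_int1 : Integrable (fun y : EuclideanSpace ℝ (Fin (m + 1)) =>
      (1 + (inner ℝ u y : ℝ) ^ 2)⁻¹ *
        (1 + (‖y‖ ^ 2 - (inner ℝ u y : ℝ) ^ 2)) ^ (-((m + 1 : ℕ) : ℝ) / 2)) :=
    integrable_inner_bound m (r := ((m + 1 : ℕ) : ℝ))
      (by exact_mod_cast Nat.lt_succ_self m) u hu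
  have h_int2 : Integrable (fun y : EuclideanSpace ℝ (Fin (m + 1)) =>
      (1 + ‖y‖ ^ 2) ^ (-((((m + 1 : ℕ) : ℝ) + 2) / 2))) := by
    have : ((Module.finrank ℝ (EuclideanSpace ℝ (Fin (m + 1)))) : ℝ) < ((m + 1 : ℕ) : ℝ) + 2 := by
      rw [finrank_euclideanSpace_fin]
      linarith
    have h := integrable_rpow_neg_one_add_norm_sq
      (E := EuclideanSpace ℝ (Fin (m + 1))) (μ := volume) this
    exact h.congr (Filter.Eventually.of_forall fun y => by rw [neg_div])
  have h_int : Integrable (fun y : EuclideanSpace ℝ (Fin (m + 1)) =>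
      2 ^ (((m + 1 : ℕ) : ℝ) - 2) *
        ((1 + (inner ℝ u y : ℝ) ^ 2)⁻¹ *
          (1 + (‖y‖ ^ 2 - (inner ℝ u y : ℝ) ^ 2)) ^ (-((m + 1 : ℕ) : ℝ) / 2)
         + (1 + ‖y‖ ^ 2) ^ (-((((m + 1 : ℕ) : ℝ) + 2) / 2)))) :=
    (h_int1.add h_int2).const_mul _
  -- dominated convergence
  have hdct : Tendsto (fun l : ℝ => ∫ y : EuclideanSpace ℝ (Fin (m + 1)),
      (l * ‖a₁ - a₂‖) ^ (((m + 1 : ℕ) : ℝ) - 2) *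
        ((1 + ‖y‖ ^ 2) ^ (-((((m + 1 : ℕ) : ℝ) + 2) / 2)) *
          (1 + ‖l • (a₁ - a₂) + y‖ ^ 2) ^ (-((((m + 1 : ℕ) : ℝ) - 2) / 2)))) atTop
      (nhds (∫ x : EuclideanSpace ℝ (Fin (m + 1)), (1 + ‖x‖ ^ 2) ^ (-((((m + 1 : ℕ) : ℝ) + 2) / 2)))) := by
    apply tendsto_integral_filter_of_dominated_convergence
      (fun y : EuclideanSpace ℝ (Fin (m + 1)) =>
        2 ^ (((m + 1 : ℕ) : ℝ) - 2) *
          ((1 + (inner ℝ u y : ℝ) ^ 2)⁻¹ *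
            (1 + (‖y‖ ^ 2 - (inner ℝ u y : ℝ) ^ 2)) ^ (-((m + 1 : ℕ) : ℝ) / 2)
           + (1 + ‖y‖ ^ 2) ^ (-((((m + 1 : ℕ) : ℝ) + 2) / 2))))
    · filter_upwards with l
      apply Continuous.aestronglyMeasurable
      apply continuous_const.mul
      apply Continuous.mul
      · exact (continuous_const.add (continuous_norm.pow 2)).rpow_const
          (fun y => Or.inl (by simp only [Pi.add_apply, Pi.pow_apply]; positivity))
      · exact ((continuous_const.add ((continuous_const.add continuous_id).norm.pow 2))).rpow_const
          (fun y => Or.inl (by simp only [Pi.add_apply, Pi.pow_apply]; positivity))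
    · filter_upwards [eventually_ge_atTop (1 : ℝ)] with l hl
      filter_upwards with y
      have hl0 : 0 < l := lt_of_lt_of_le one_pos hl
      rw [Real.norm_eq_abs, abs_of_nonneg (by positivity)]
      exact bubble_bound (m + 1) hn hΔ hl0 y
    · exact h_int
    · filter_upwards with y
      exact bubble_ptlimit (m + 1) hn hΔ y
  refine hdct.congr' ?_
  filter_upwards [eventually_ge_atTop (1 : ℝ)] with l hl
  exact (bubble_cov (m + 1) hn a₁ a₂ (lt_of_lt_of_le one_pos hl)).symm
end
end

section
/- Let E be a real Hilbert space, J : E → ℝ a differentiable function with gradient ∇J, and let η : [s₀, t₀] → E (s₀ < t₀) be differentiable with η′(s) = −∇J(η(s)) for all s ∈ [s₀, t₀]. Suppose there are constants γ > 0, M₀ > 0, β > 0 such that for all s ∈ [s₀, t₀], γ ≤ ‖∇J(η(s))‖² and ‖∇J(η(s))‖ ≤ M₀, and suppose ‖η(t₀) − η(s₀)‖ ≥ β. Then t₀ − s₀ ≥ β/M₀ and J(η(t₀)) − J(η(s₀)) ≤ −γβ/M₀. -/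
/-- Quantitative descent along a negative gradient flow line: if on `[s₀,t₀]` the gradient
satisfies `γ ≤ ‖∇J‖²` and `‖∇J‖ ≤ M₀`, and the endpoints of the flow line are at distance
at least `β`, then `t₀ − s₀ ≥ β/M₀` and `J(η(t₀)) − J(η(s₀)) ≤ −γβ/M₀`. -/
theorem gradient_flow_descent {E : Type*} [NormedAddCommGroup E] [InnerProductSpace ℝ E]
    [CompleteSpace E] (J : E → ℝ) (hJ : Differentiable ℝ J)
    (s₀ t₀ : ℝ) (hst : s₀ < t₀) (η : ℝ → E)
    (hη : ∀ s ∈ Set.Icc s₀ t₀, HasDerivAt η (-gradient J (η s)) s)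
    (γ M₀ β : ℝ) (hγ : 0 < γ) (hM₀ : 0 < M₀) (hβ : 0 < β)
    (hlow : ∀ s ∈ Set.Icc s₀ t₀, γ ≤ ‖gradient J (η s)‖ ^ 2)
    (hup : ∀ s ∈ Set.Icc s₀ t₀, ‖gradient J (η s)‖ ≤ M₀)
    (hdist : β ≤ ‖η t₀ - η s₀‖) :
    β / M₀ ≤ t₀ - s₀ ∧ J (η t₀) - J (η s₀) ≤ -(γ * β / M₀) := by
  have hs0 : s₀ ∈ Set.Icc s₀ t₀ := ⟨le_refl _, hst.le⟩
  have ht0 : t₀ ∈ Set.Icc s₀ t₀ := ⟨hst.le, le_refl _⟩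
  -- Lipschitz bound: ‖η t₀ - η s₀‖ ≤ M₀ (t₀ - s₀)
  have hlip : ‖η t₀ - η s₀‖ ≤ M₀ * ‖t₀ - s₀‖ := by
    refine (convex_Icc s₀ t₀).norm_image_sub_le_of_norm_hasDerivWithin_le
      (f' := fun s => -gradient J (η s))
      (fun x hx => (hη x hx).hasDerivWithinAt) (fun x hx => ?_) hs0 ht0
    simpa using hup x hx
  have habs : ‖t₀ - s₀‖ = t₀ - s₀ := by
    rw [Real.norm_eq_abs, abs_of_nonneg (by linarith)]
  have h1 : β / M₀ ≤ t₀ - s₀ := by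
    rw [div_le_iff₀ hM₀]
    calc β ≤ ‖η t₀ - η s₀‖ := hdist
    _ ≤ M₀ * ‖t₀ - s₀‖ := hlip
    _ = (t₀ - s₀) * M₀ := by rw [habs]; ring
  -- Derivative of J ∘ η
  have hderiv : ∀ s ∈ Set.Icc s₀ t₀,
      HasDerivAt (fun u => J (η u)) (-(‖gradient J (η s)‖ ^ 2)) s := by
    intro s hs
    have hg := (hJ (η s)).hasGradientAt
    have := hg.hasFDerivAt.comp_hasDerivAt s (hη s hs)
    refine this.congr_deriv ?_
    rw [InnerProductSpace.toDual_apply_apply]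
    simp [real_inner_smul_self_left, real_inner_self_eq_norm_sq, inner_neg_right]
  -- J ∘ η decreases at rate at least γ
  have hdec : J (η t₀) - J (η s₀) ≤ -γ * (t₀ - s₀) := by
    refine (convex_Icc s₀ t₀).image_sub_le_mul_sub_of_deriv_le
      (fun x hx => ((hderiv x hx).continuousAt).continuousWithinAt)
      (fun x hx => ((hderiv x (interior_subset hx)).differentiableAt).differentiableWithinAt)
      (fun x hx => ?_) s₀ hs0 t₀ ht0 hst.le
    have hx' := interior_subset hx
    rw [(hderiv x hx').deriv]
    have := hlow x hx'
    linarith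
  refine ⟨h1, ?_⟩
  calc J (η t₀) - J (η s₀) ≤ -γ * (t₀ - s₀) := hdec
    _ ≤ -γ * (β / M₀) := by
        apply mul_le_mul_of_nonpos_left h1 (by linarith)
    _ = -(γ * β / M₀) := by ring
end
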